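/- arXiv:cond-mat/0511161 — 4 statements merged into one kernel-verified Lean document; each statement's English description precedes it below -/
import Mathlib

section
/- Let $\{\tilde x_k\}_{|k|\le M}$ be real numbers satisfying the recursion $\tilde x_{k+1} - 2\tilde x_k + \tilde x_{k-1} = 2\tilde x_k^3 + \tilde r_k$ with $|\tilde r_k| \le \varepsilon^3$ and $|\tilde x_k| \le \varepsilon_1$ for all $|k| \le M$. Then for any integer $M_1 > 2\varepsilon^{-1}/3$ and any $|k| \le M - 2M_1$, one has $|\tilde x_k| \le \max\{\varepsilon, (2M_1^{-2}\varepsilon_1)^{1/3}\}$. -/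
/-- Core growth lemma: if `x k ≥ a ≥ ε` and the right slope at `k` is nonnegative,
then the sequence grows convexly, forcing `a³ M₁² ≤ ε₁`. -/
lemma stmt_0_core (M M₁ : ℕ) (hM₁ : 0 < M₁) (ε ε₁ a : ℝ) (hε : 0 < ε) (ha : ε ≤ a)
    (x r : ℤ → ℝ)
    (hrec : ∀ k : ℤ, |k| < (M : ℤ) →
      x (k + 1) - 2 * x k + x (k - 1) = 2 * (x k) ^ 3 + r k)
    (hr : ∀ k : ℤ, |k| ≤ (M : ℤ) → |r k| ≤ ε ^ 3)
    (hx : ∀ k : ℤ, |k| ≤ (M : ℤ) → |x k| ≤ ε₁)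
    (k : ℤ) (hk : |k| ≤ (M : ℤ) - 2 * (M₁ : ℤ))
    (hxk : a ≤ x k) (hd : 0 ≤ x (k + 1) - x k) :
    a ^ 3 * (M₁ : ℝ) ^ 2 ≤ ε₁ := by
  have ha0 : 0 < a := hε.trans_le ha
  have hε3 : ε ^ 3 ≤ a ^ 3 := pow_le_pow_left₀ hε.le ha 3
  have key : ∀ i : ℕ, i ≤ 2 * M₁ →
      (a + a ^ 3 * ((i : ℝ) * ((i : ℝ) - 1) / 2) ≤ x (k + (i : ℤ))) ∧
      (i < 2 * M₁ → (i : ℝ) * a ^ 3 ≤ x (k + (i : ℤ) + 1) - x (k + (i : ℤ))) := by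
    intro i
    induction i with
    | zero =>
      intro _
      constructor
      · norm_num; exact hxk
      · intro _; norm_num; linarith
    | succ i ih =>
      intro hi1
      have hi : i < 2 * M₁ := hi1
      obtain ⟨ihx, ihd⟩ := ih hi.le
      have hslope := ihd hi
      have hnn : (0:ℝ) ≤ (i : ℝ) * ((i : ℝ) - 1) := by
        rcases Nat.eq_zero_or_pos i with h | h
        · simp [h]
        · have h1 : (1:ℝ) ≤ (i : ℝ) := by exact_mod_cast h
          nlinarith
      have e : (k + ((i + 1 : ℕ) : ℤ)) = k + (i : ℤ) + 1 := by push_cast; ring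
      have hxk1 : a ≤ x (k + (i : ℤ) + 1) := by
        have hin : (0:ℝ) ≤ (i : ℝ) := Nat.cast_nonneg i
        nlinarith [pow_pos ha0 3]
      constructor
      · rw [e]
        push_cast
        nlinarith [pow_pos ha0 3]
      · intro hi2
        have habs : |k + (i : ℤ) + 1| < (M : ℤ) := by
          have h1 : |k + ((i : ℤ) + 1)| ≤ |k| + |(i : ℤ) + 1| := abs_add_le _ _
          have h2 : |(i : ℤ) + 1| = (i : ℤ) + 1 := abs_of_nonneg (by positivity)
          have h3 : ((i : ℤ) + 1) < 2 * (M₁ : ℤ) := by exact_mod_cast hi2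
          have h4 : k + (i : ℤ) + 1 = k + ((i : ℤ) + 1) := by ring
          rw [h4]
          linarith
        have hrec1 := hrec (k + (i : ℤ) + 1) habs
        have e1 : (k + (i : ℤ) + 1) - 1 = k + (i : ℤ) := by ring
        rw [e1] at hrec1
        have hcube : a ^ 3 ≤ x (k + (i : ℤ) + 1) ^ 3 := pow_le_pow_left₀ ha0.le hxk1 3
        have hrk := abs_le.mp (hr (k + (i : ℤ) + 1) habs.le)
        rw [e]
        push_cast
        nlinarith [hrk.1]
  obtain ⟨hfin, -⟩ := key (2 * M₁) le_rfl
  have hub : |x (k + ((2 * M₁ : ℕ) : ℤ))| ≤ ε₁ := by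
    apply hx
    have h1 : |k + ((2 * M₁ : ℕ) : ℤ)| ≤ |k| + |((2 * M₁ : ℕ) : ℤ)| := abs_add_le _ _
    have h2 : |((2 * M₁ : ℕ) : ℤ)| = ((2 * M₁ : ℕ) : ℤ) := abs_of_nonneg (by positivity)
    have h3 : ((2 * M₁ : ℕ) : ℤ) = 2 * (M₁ : ℤ) := by push_cast; ring
    linarith
  have hM1 : (1:ℝ) ≤ (M₁ : ℝ) := by exact_mod_cast hM₁
  have hf : (M₁ : ℝ) ^ 2 ≤ ((2 * M₁ : ℕ) : ℝ) * (((2 * M₁ : ℕ) : ℝ) - 1) / 2 := by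
    push_cast
    nlinarith
  have := mul_le_mul_of_nonneg_left hf (pow_pos ha0 3).le
  linarith [(abs_le.mp hub).2]

/-- Version without the slope assumption, via reflection. -/
lemma stmt_0_core2 (M M₁ : ℕ) (hM₁ : 0 < M₁) (ε ε₁ a : ℝ) (hε : 0 < ε) (ha : ε ≤ a)
    (x r : ℤ → ℝ)
    (hrec : ∀ k : ℤ, |k| < (M : ℤ) →
      x (k + 1) - 2 * x k + x (k - 1) = 2 * (x k) ^ 3 + r k)
    (hr : ∀ k : ℤ, |k| ≤ (M : ℤ) → |r k| ≤ ε ^ 3)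
    (hx : ∀ k : ℤ, |k| ≤ (M : ℤ) → |x k| ≤ ε₁)
    (k : ℤ) (hk : |k| ≤ (M : ℤ) - 2 * (M₁ : ℤ))
    (hxk : a ≤ x k) :
    a ^ 3 * (M₁ : ℝ) ^ 2 ≤ ε₁ := by
  have hM₁' : (0:ℤ) < (M₁ : ℤ) := by exact_mod_cast hM₁
  have hkM : |k| < (M : ℤ) := by linarith
  rcases le_or_gt 0 (x (k + 1) - x k) with hd | hd
  · exact stmt_0_core M M₁ hM₁ ε ε₁ a hε ha x r hrec hr hx k hk hxk hd
  · have hreq := hrec k hkM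
    have hcube : a ^ 3 ≤ (x k) ^ 3 := pow_le_pow_left₀ (hε.le.trans ha) hxk 3
    have hε3 : ε ^ 3 ≤ a ^ 3 := pow_le_pow_left₀ hε.le ha 3
    have hrk := abs_le.mp (hr k hkM.le)
    have hslopeL : 0 ≤ x (k - 1) - x k := by linarith [hrk.1]
    refine stmt_0_core M M₁ hM₁ ε ε₁ a hε ha (fun j => x (-j)) (fun j => r (-j))
      ?_ ?_ ?_ (-k) (by simpa using hk) ?_ ?_
    · intro j hj
      have h := hrec (-j) (by simpa using hj)
      rw [show -(j + 1) = -j - 1 from by ring, show -(j - 1) = -j + 1 from by ring]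
      linarith
    · intro j hj
      exact hr (-j) (by simpa using hj)
    · intro j hj
      exact hx (-j) (by simpa using hj)
    · simpa using hxk
    · rw [show -(-k + 1) = k - 1 from by ring, show -(-k) = k from by ring]
      exact hslopeL

/-- Discrete nonlinear recursion bound (Proposition on `d²`, first part):
if `x_{k+1} - 2x_k + x_{k-1} = 2 x_k³ + r_k` with `|r_k| ≤ ε³` and `|x_k| ≤ ε₁`
for `|k| ≤ M`, then for `M₁ > 2/(3ε)` and `|k| ≤ M - 2M₁` one has
`|x_k| ≤ max {ε, (2 ε₁ / M₁²)^{1/3}}`. -/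
theorem stmt_0 (M M₁ : ℕ) (hM : 0 < M) (hM₁ : 0 < M₁)
    (ε ε₁ : ℝ) (hε : 0 < ε) (hε₁ : 0 < ε₁)
    (x r : ℤ → ℝ)
    (hrec : ∀ k : ℤ, |k| < (M : ℤ) →
      x (k + 1) - 2 * x k + x (k - 1) = 2 * (x k) ^ 3 + r k)
    (hr : ∀ k : ℤ, |k| ≤ (M : ℤ) → |r k| ≤ ε ^ 3)
    (hx : ∀ k : ℤ, |k| ≤ (M : ℤ) → |x k| ≤ ε₁)
    (hM₁ε : (M₁ : ℝ) > 2 * ε⁻¹ / 3) :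
    ∀ k : ℤ, |k| ≤ (M : ℤ) - 2 * (M₁ : ℤ) →
      |x k| ≤ max ε ((2 * ε₁ / (M₁ : ℝ) ^ 2) ^ ((1 : ℝ) / 3)) := by
  intro k hk
  by_contra hcon
  push_neg at hcon
  set b := (2 * ε₁ / (M₁ : ℝ) ^ 2) ^ ((1 : ℝ) / 3) with hbdef
  have hεlt : ε < |x k| := lt_of_le_of_lt (le_max_left _ _) hcon
  have hblt : b < |x k| := lt_of_le_of_lt (le_max_right _ _) hcon
  have hc0 : (0:ℝ) ≤ 2 * ε₁ / (M₁ : ℝ) ^ 2 := by positivity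
  have hb3 : b ^ 3 = 2 * ε₁ / (M₁ : ℝ) ^ 2 := by
    rw [hbdef, ← Real.rpow_natCast _ 3, ← Real.rpow_mul hc0]
    norm_num
  have key : |x k| ^ 3 * (M₁ : ℝ) ^ 2 ≤ ε₁ := by
    rcases le_or_gt 0 (x k) with hs | hs
    · exact stmt_0_core2 M M₁ hM₁ ε ε₁ (|x k|) hε hεlt.le x r hrec hr hx k hk
        (le_of_eq (abs_of_nonneg hs))
    · refine stmt_0_core2 M M₁ hM₁ ε ε₁ (|x k|) hε hεlt.le (fun j => -x j) (fun j => -r j)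
        ?_ ?_ ?_ k hk ?_
      · intro j hj
        have h := hrec j hj
        ring_nf
        ring_nf at h
        linarith
      · intro j hj
        simpa using hr j hj
      · intro j hj
        simpa using hx j hj
      · rw [abs_of_neg hs]
  have hM₁pos : (0:ℝ) < (M₁ : ℝ) ^ 2 := by
    have : (0:ℝ) < (M₁ : ℝ) := by exact_mod_cast hM₁
    positivity
  have hb0 : (0:ℝ) ≤ b := Real.rpow_nonneg hc0 _
  have hb3lt : b ^ 3 < |x k| ^ 3 := pow_lt_pow_left₀ hblt hb0 (by norm_num)
  rw [hb3, div_lt_iff₀ hM₁pos] at hb3lt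
  linarith
end

section
/- Let $\{\tilde x_k\}_{|k|\le M}$ satisfy $\tilde x_{k+1} - 2\tilde x_k + \tilde x_{k-1} = 2\tilde x_k^3 + \tilde r_k$ with $|\tilde r_k|\le \varepsilon^3$ and $|\tilde x_k|\le \varepsilon_1$. Then for any integer $M_1 > 2\varepsilon^{-1}/3$ and any $|k|\le M - 2M_1$, the first differences satisfy $|\tilde x_{k+1} - \tilde x_k| \le 4\max\{\varepsilon^2, (2M_1^{-2}\varepsilon_1)^{2/3}\}$. -/
set_option maxHeartbeats 1000000


private lemma cube_le_cube {a b : ℝ} (ha : 0 ≤ a) (h : a ≤ b) : a ^ 3 ≤ b ^ 3 :=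
  pow_le_pow_left₀ ha h 3

/-- Escape lemma: a point above `A` with nonnegative forward difference
escapes above `ε₁` within `M₁` steps, contradiction. -/
private lemma esc (M₁ : ℕ) (hM₁ : 1 ≤ M₁) (A ε ε₁ : ℝ) (hε : 0 < ε) (hεA : ε ≤ A)
    (h2 : 2 * ε₁ ≤ A ^ 3 * (M₁ : ℝ) ^ 2)
    (hcase : A ^ 2 * (M₁ : ℝ) ≤ 2 ∨ 3 ≤ M₁)
    (u : ℕ → ℝ)
    (hu : ∀ i, i ≤ M₁ → |u i| ≤ ε₁)
    (hs : ∀ i, 1 ≤ i → i + 1 ≤ M₁ →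
      u (i + 1) - 2 * u i + u (i - 1) ≥ 2 * (u i) ^ 3 - ε ^ 3)
    (h0 : A < u 0) (h1 : u 0 ≤ u 1) : False := by
  have hA : 0 < A := lt_of_lt_of_le hε hεA
  have hε3A : ε ^ 3 ≤ A ^ 3 := cube_le_cube hε.le hεA
  have key : ∀ i, i ≤ M₁ → (u 0 + ((i : ℝ) * ((i : ℝ) - 1) / 2) * A ^ 3 ≤ u i ∧
      (i + 1 ≤ M₁ → (i : ℝ) * A ^ 3 ≤ u (i + 1) - u i)) := by
    intro i
    induction i with
    | zero =>
      intro _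
      refine ⟨by norm_num, fun _ => by simpa using sub_nonneg.mpr h1⟩
    | succ n ih =>
      intro hn1
      obtain ⟨ha, hb⟩ := ih (by omega)
      have hd := hb hn1
      have hn0 : (0:ℝ) ≤ (n : ℝ) := Nat.cast_nonneg n
      have e : (((n : ℝ) + 1) * (((n : ℝ) + 1) - 1) / 2) * A ^ 3
          = ((n : ℝ) * ((n : ℝ) - 1) / 2) * A ^ 3 + (n : ℝ) * A ^ 3 := by ring
      have hup : u 0 + (((n : ℝ) + 1) * (((n : ℝ) + 1) - 1) / 2) * A ^ 3 ≤ u (n + 1) := by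
        linarith [ha, hd, e]
      constructor
      · push_cast
        exact hup
      · intro hn2
        have hcn : 0 ≤ (((n : ℝ) + 1) * (((n : ℝ) + 1) - 1) / 2) * A ^ 3 := by
          have e2 : (((n : ℝ) + 1) * (((n : ℝ) + 1) - 1) / 2) * A ^ 3
              = ((n:ℝ) + 1) * (n:ℝ) * A ^ 3 / 2 := by ring
          rw [e2]; positivity
        have hu1A : A < u (n + 1) := by linarith
        have hcube : A ^ 3 ≤ (u (n + 1)) ^ 3 := cube_le_cube hA.le hu1A.le
        have hsn := hs (n + 1) (by omega) hn2
        simp only [Nat.add_sub_cancel] at hsn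
        have : ((n:ℝ) + 1) * A ^ 3 ≤ u (n + 1 + 1) - u (n + 1) := by nlinarith
        push_cast
        exact this
  -- final contradiction
  rcases Nat.lt_or_ge M₁ 2 with hM2 | hM2
  · -- M₁ = 1
    have hM1 : M₁ = 1 := by omega
    subst hM1
    have hA2 : A ^ 2 ≤ 2 := by
      rcases hcase with h | h
      · simpa using h
      · omega
    norm_num at h2
    have hε₁A : ε₁ ≤ A := by
      nlinarith [mul_nonneg (sub_nonneg.mpr hA2) hA.le]
    have h1' : u 1 ≤ ε₁ := (abs_le.mp (hu 1 le_rfl)).2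
    linarith
  · obtain ⟨n, rfl⟩ : ∃ n, M₁ = n + 2 := ⟨M₁ - 2, by omega⟩
    have hn0 : (0:ℝ) ≤ (n : ℝ) := Nat.cast_nonneg n
    have k1 := (key (n + 1) (by omega)).1
    have k2 := (key n (by omega)).2 (by omega)
    have hsn := hs (n + 1) (by omega) (by omega)
    simp only [Nat.add_sub_cancel] at hsn
    push_cast at k1
    obtain ⟨w, hw⟩ : ∃ w : ℝ, w = (((n : ℝ) + 1) * (((n : ℝ) + 1) - 1) / 2) * A ^ 3 :=
      ⟨_, rfl⟩
    rw [← hw] at k1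
    have hw0 : 0 ≤ w := by
      have e2 : w = ((n:ℝ) + 1) * (n:ℝ) * A ^ 3 / 2 := by rw [hw]; ring
      rw [e2]; positivity
    have hu1 : A + w < u (n + 1) := by linarith
    have hAw : (0:ℝ) ≤ A + w := by linarith
    have hcube : (A + w) ^ 3 ≤ (u (n + 1)) ^ 3 := cube_le_cube hAw hu1.le
    have hexp : A ^ 3 + 3 * A ^ 2 * w ≤ (A + w) ^ 3 := by
      nlinarith [mul_nonneg hw0 hw0, mul_nonneg (mul_nonneg hw0 hw0) hw0,
        mul_nonneg hA.le (mul_nonneg hw0 hw0)]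
    have hstep1 : A ^ 3 + 6 * A ^ 2 * w ≤ 2 * (u (n+1)) ^ 3 - ε ^ 3 := by
      linarith [hcube, hexp, hε3A]
    have hutop : u (n + 2) ≤ ε₁ := (abs_le.mp (hu (n + 2) le_rfl)).2
    have hbig : u 0 + w + (n:ℝ) * A ^ 3 + (A ^ 3 + 6 * A ^ 2 * w) ≤ u (n + 2) := by
      have : u (n+2) = u (n+1) + (u (n+1) - u n) + (u (n+1+1) - 2 * u (n+1) + u n) := by
        norm_num; ring
      linarith [k1, k2, hsn, hstep1, this]
    have hM₁r : ((n:ℝ) + 2) = ((n + 2 : ℕ) : ℝ) := by push_cast; ring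
    have h2' : 2 * ε₁ ≤ A ^ 3 * ((n:ℝ) + 2) ^ 2 := by rw [hM₁r]; exact h2
    -- ε₁ > A + w + (n+1) A³ + 6 A² w   (strict, from u 0 > A)
    have e1 : A + w + ((n:ℝ)+1) * A ^ 3 + 6 * A ^ 2 * w < ε₁ := by linarith [hbig, hutop, h0]
    have e2 : A ^ 3 * ((n:ℝ)+2) ^ 2 - 2 * (((n:ℝ)+1) * A ^ 3) - 2 * w
        = A ^ 3 * ((n:ℝ)+2) := by rw [hw]; ring
    have e3 : 2 * A + 12 * A ^ 2 * w < A ^ 3 * ((n:ℝ)+2) := by linarith [e1, h2', e2]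
    rcases le_or_gt (A ^ 2 * ((n:ℝ) + 2)) 2 with hA2' | hA2'
    · have hup : A ^ 3 * ((n:ℝ)+2) ≤ 2 * A := by
        nlinarith [mul_le_mul_of_nonneg_left hA2' hA.le]
      nlinarith [mul_nonneg (sq_nonneg A) hw0]
    · have hn1 : 1 ≤ n := by
        rcases hcase with h | h
        · exfalso
          rw [hM₁r] at hA2'; linarith
        · omega
      have hn1' : (1:ℝ) ≤ (n:ℝ) := by exact_mod_cast hn1
      have h12 : ((n:ℝ)+2) ^ 2 ≤ 12 * (n:ℝ) * ((n:ℝ)+1) := by nlinarith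
      have h5 : 2 * A ^ 3 ≤ A ^ 5 * ((n:ℝ)+2) := by
        nlinarith [mul_pos (by linarith : (0:ℝ) < A ^ 2 * ((n:ℝ)+2) - 2) (pow_pos hA 3)]
      have hkey : A ^ 3 * ((n:ℝ)+2) ≤ 12 * A ^ 2 * w := by
        rw [hw]
        nlinarith [mul_nonneg (sub_nonneg.mpr h12) (pow_pos hA 5).le,
          mul_nonneg (sub_nonneg.mpr h5) (by linarith : (0:ℝ) ≤ (n:ℝ)+2)]
      linarith [e3, hkey, hA]


private lemma landau (L : ℕ) (hL : 1 ≤ L) (A C : ℝ) (u : ℕ → ℝ)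
    (hu : ∀ i, i ≤ L → |u i| ≤ A)
    (hs : ∀ i, 1 ≤ i → i + 1 ≤ L → |u (i + 1) - 2 * u i + u (i - 1)| ≤ C) :
    (L : ℝ) * |u 1 - u 0| ≤ 2 * A + ((L : ℝ) * ((L : ℝ) - 1) / 2) * C := by
  have hd : ∀ j, j + 1 ≤ L → |u (j + 1) - u j - (u 1 - u 0)| ≤ (j : ℝ) * C := by
    intro j
    induction j with
    | zero => intro _; simp
    | succ m ih =>
      intro hm
      have h1 := ih (by omega)
      have h2 := hs (m + 1) (by omega) hm
      simp only [Nat.add_sub_cancel] at h2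
      have e : u (m + 1 + 1) - u (m + 1) - (u 1 - u 0)
          = (u (m + 1) - u m - (u 1 - u 0)) + (u (m + 1 + 1) - 2 * u (m + 1) + u m) := by
        ring
      calc |u (m + 1 + 1) - u (m + 1) - (u 1 - u 0)|
          ≤ |u (m + 1) - u m - (u 1 - u 0)| + |u (m + 1 + 1) - 2 * u (m + 1) + u m| := by
            rw [e]; exact abs_add_le _ _
        _ ≤ (m : ℝ) * C + C := add_le_add h1 h2
        _ = ((m + 1 : ℕ) : ℝ) * C := by push_cast; ring
  have hsum : ∑ j ∈ Finset.range L, (u (j + 1) - u j - (u 1 - u 0))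
      = (u L - u 0) - (L : ℝ) * (u 1 - u 0) := by
    rw [Finset.sum_sub_distrib, Finset.sum_range_sub (fun j => u j)]
    simp [mul_comm]
    ring
  have habs : |(u L - u 0) - (L : ℝ) * (u 1 - u 0)| ≤ ((L : ℝ) * ((L : ℝ) - 1) / 2) * C := by
    rw [← hsum]
    calc |∑ j ∈ Finset.range L, (u (j + 1) - u j - (u 1 - u 0))|
        ≤ ∑ j ∈ Finset.range L, |u (j + 1) - u j - (u 1 - u 0)| :=
          Finset.abs_sum_le_sum_abs _ _
      _ ≤ ∑ j ∈ Finset.range L, (j : ℝ) * C := by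
          apply Finset.sum_le_sum
          intro j hj
          exact hd j (Finset.mem_range.mp hj)
      _ = ((L : ℝ) * ((L : ℝ) - 1) / 2) * C := by
          rw [← Finset.sum_mul]
          have h3 := congrArg (Nat.cast : ℕ → ℝ) (Finset.sum_range_id_mul_two L)
          push_cast [Nat.cast_sub hL] at h3
          have h : (∑ j ∈ Finset.range L, (j:ℝ)) = (L : ℝ) * ((L : ℝ) - 1) / 2 := by
            linarith
          rw [h]
  have h0 : |u 0| ≤ A := hu 0 (by omega)
  have hL' : |u L| ≤ A := hu L le_rfl
  calc (L : ℝ) * |u 1 - u 0| = |(L : ℝ) * (u 1 - u 0)| := by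
        rw [abs_mul, abs_of_nonneg (by positivity : (0:ℝ) ≤ (L:ℝ))]
    _ = |(u L - u 0) - ((u L - u 0) - (L : ℝ) * (u 1 - u 0))| := by ring_nf
    _ ≤ |u L - u 0| + |(u L - u 0) - (L : ℝ) * (u 1 - u 0)| := abs_sub _ _
    _ ≤ (|u L| + |u 0|) + ((L : ℝ) * ((L : ℝ) - 1) / 2) * C :=
        add_le_add (abs_sub _ _) habs
    _ ≤ 2 * A + ((L : ℝ) * ((L : ℝ) - 1) / 2) * C := by linarith

private lemma supbd (M M₁ : ℕ) (hM₁ : 1 ≤ M₁) (A ε ε₁ : ℝ) (hε : 0 < ε) (hεA : ε ≤ A)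
    (h2 : 2 * ε₁ ≤ A ^ 3 * (M₁ : ℝ) ^ 2)
    (hcase : A ^ 2 * (M₁ : ℝ) ≤ 2 ∨ 3 ≤ M₁)
    (v : ℤ → ℝ)
    (hrec : ∀ j : ℤ, |j| < (M : ℤ) →
      v (j + 1) - 2 * v j + v (j - 1) ≥ 2 * (v j) ^ 3 - ε ^ 3)
    (hv : ∀ j : ℤ, |j| ≤ (M : ℤ) → |v j| ≤ ε₁) :
    ∀ j : ℤ, |j| ≤ (M : ℤ) - (M₁ : ℤ) → v j ≤ A := by
  intro j hj
  by_contra hc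
  push_neg at hc
  rw [abs_le] at hj
  have hA : 0 < A := lt_of_lt_of_le hε hεA
  have hε3 : ε ^ 3 ≤ (v j) ^ 3 := pow_le_pow_left₀ hε.le (le_of_lt (lt_of_le_of_lt hεA hc)) 3
  rcases le_or_gt (v j) (v (j + 1)) with hdir | hdir
  · -- escape to the right
    refine esc M₁ hM₁ A ε ε₁ hε hεA h2 hcase (fun i => v (j + (i : ℤ))) ?_ ?_ ?_ ?_
    · intro i hi
      have hi' : (i : ℤ) ≤ (M₁ : ℤ) := by exact_mod_cast hi
      have hi0 : (0 : ℤ) ≤ (i : ℤ) := by positivity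
      refine hv _ ?_
      rw [abs_le]; omega
    · intro i h1i hiM
      have h1i' : (1 : ℤ) ≤ (i : ℤ) := by exact_mod_cast h1i
      have hiM' : (i : ℤ) + 1 ≤ (M₁ : ℤ) := by exact_mod_cast hiM
      have hR := hrec (j + (i : ℤ)) (by rw [abs_lt]; omega)
      have e1 : j + ((i + 1 : ℕ) : ℤ) = j + (i : ℤ) + 1 := by push_cast; ring
      have e2 : j + ((i - 1 : ℕ) : ℤ) = j + (i : ℤ) - 1 := by
        push_cast [Nat.cast_sub h1i]; ring
      simpa only [e1, e2] using hR
    · simpa using hc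
    · simpa using hdir
  · -- v (j-1) ≥ v j, escape to the left
    have hR := hrec j (by rw [abs_lt]; omega)
    have hd : v j ≤ v (j - 1) := by nlinarith [pow_pos hε 3]
    refine esc M₁ hM₁ A ε ε₁ hε hεA h2 hcase (fun i => v (j - (i : ℤ))) ?_ ?_ ?_ ?_
    · intro i hi
      have hi' : (i : ℤ) ≤ (M₁ : ℤ) := by exact_mod_cast hi
      have hi0 : (0 : ℤ) ≤ (i : ℤ) := by positivity
      refine hv _ ?_
      rw [abs_le]; omega
    · intro i h1i hiM
      have h1i' : (1 : ℤ) ≤ (i : ℤ) := by exact_mod_cast h1i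
      have hiM' : (i : ℤ) + 1 ≤ (M₁ : ℤ) := by exact_mod_cast hiM
      have hR2 := hrec (j - (i : ℤ)) (by rw [abs_lt]; omega)
      have e1 : j - ((i + 1 : ℕ) : ℤ) = j - (i : ℤ) - 1 := by push_cast; ring
      have e2 : j - ((i - 1 : ℕ) : ℤ) = j - (i : ℤ) + 1 := by
        push_cast [Nat.cast_sub h1i]; ring
      simp only [e1, e2]
      linarith [hR2]
    · simpa using hc
    · simpa using hd


/-- Discrete nonlinear recursion bound (Proposition on `d²`, first part):
if `x_{k+1} - 2x_k + x_{k-1} = 2 x_k³ + r_k` with `|r_k| ≤ ε³` and `|x_k| ≤ ε₁`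
for `|k| ≤ M`, then for `M₁ > 2/(3ε)` and `|k| ≤ M - 2M₁` one has
`|x_k| ≤ max {ε, (2 ε₁ / M₁²)^{1/3}}`. -/
theorem stmt_1 (M M₁ : ℕ) (hM : 0 < M) (hM₁ : 0 < M₁)
    (ε ε₁ : ℝ) (hε : 0 < ε) (hε₁ : 0 < ε₁)
    (x r : ℤ → ℝ)
    (hrec : ∀ k : ℤ, |k| < (M : ℤ) →
      x (k + 1) - 2 * x k + x (k - 1) = 2 * (x k) ^ 3 + r k)
    (hr : ∀ k : ℤ, |k| ≤ (M : ℤ) → |r k| ≤ ε ^ 3)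
    (hx : ∀ k : ℤ, |k| ≤ (M : ℤ) → |x k| ≤ ε₁)
    (hM₁ε : (M₁ : ℝ) > 2 * ε⁻¹ / 3) :
    ∀ k : ℤ, |k| ≤ (M : ℤ) - 2 * (M₁ : ℤ) →
      |x (k + 1) - x k| ≤ 4 * max (ε ^ 2) ((2 * ε₁ / (M₁ : ℝ) ^ 2) ^ ((2 : ℝ) / 3)) := by
  intro k hk
  have hkabs := abs_nonneg k
  have hM2M : 2 * (M₁ : ℤ) ≤ (M : ℤ) := by linarith
  rw [abs_le] at hk
  set B : ℝ := 2 * ε₁ / (M₁ : ℝ) ^ 2 with hB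
  have hM₁pos : (0:ℝ) < (M₁:ℝ) := by exact_mod_cast hM₁
  have hB0 : (0:ℝ) ≤ B := by positivity
  set A : ℝ := max ε (B ^ ((1:ℝ)/3)) with hA
  have hεA : ε ≤ A := le_max_left _ _
  have hA0 : 0 < A := lt_of_lt_of_le hε hεA
  have hε3A : ε ^ 3 ≤ A ^ 3 := pow_le_pow_left₀ hε.le hεA 3
  have h13 : (B ^ ((1:ℝ)/3)) ^ (3:ℕ) = B := by
    rw [← Real.rpow_natCast (B ^ ((1:ℝ)/3)) 3, ← Real.rpow_mul hB0]
    norm_num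
  have hA3B : B ≤ A ^ 3 := by
    rw [← h13]
    exact pow_le_pow_left₀ (Real.rpow_nonneg hB0 _) (le_max_right _ _) 3
  have hBM : B * (M₁:ℝ) ^ 2 = 2 * ε₁ := by
    rw [hB]; field_simp
  have h2 : 2 * ε₁ ≤ A ^ 3 * (M₁:ℝ) ^ 2 := by
    rw [← hBM]
    exact mul_le_mul_of_nonneg_right hA3B (sq_nonneg _)
  have hmax : max (ε ^ 2) (B ^ ((2:ℝ)/3)) = A ^ 2 := by
    have h23 : (B ^ ((1:ℝ)/3)) ^ (2:ℕ) = B ^ ((2:ℝ)/3) := by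
      rw [← Real.rpow_natCast (B ^ ((1:ℝ)/3)) 2, ← Real.rpow_mul hB0]
      norm_num
    rcases le_total ε (B ^ ((1:ℝ)/3)) with h | h
    · rw [hA, max_eq_right h, ← h23,
        max_eq_right (pow_le_pow_left₀ hε.le h 2)]
    · rw [hA, max_eq_left h, ← h23,
        max_eq_left (pow_le_pow_left₀ (Real.rpow_nonneg hB0 _) h 2)]
  rw [hmax]
  by_cases hcase : A ^ 2 * (M₁ : ℝ) ≤ 2 ∨ 3 ≤ M₁
  · -- main branch
    have hsupx : ∀ j : ℤ, |j| < (M:ℤ) →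
        x (j + 1) - 2 * x j + x (j - 1) ≥ 2 * (x j) ^ 3 - ε ^ 3 := by
      intro j hj
      have h := hrec j hj
      have hrj := (abs_le.mp (hr j (le_of_lt hj))).1
      linarith
    have hsupnx : ∀ j : ℤ, |j| < (M:ℤ) →
        (-x (j + 1)) - 2 * (-x j) + (-x (j - 1)) ≥ 2 * (-x j) ^ 3 - ε ^ 3 := by
      intro j hj
      have h := hrec j hj
      have hrj := (abs_le.mp (hr j (le_of_lt hj))).2
      have e : (-x j) ^ 3 = -(x j) ^ 3 := by ring
      rw [e]; linarith
    have hsup : ∀ j : ℤ, |j| ≤ (M:ℤ) - (M₁:ℤ) → |x j| ≤ A := by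
      intro j hj
      rw [abs_le]
      constructor
      · have h' : - x j ≤ A := supbd M M₁ hM₁ A ε ε₁ hε hεA h2 hcase (fun j => - x j)
          hsupnx (fun j hj => by simpa using hx j hj) j hj
        linarith
      · exact supbd M M₁ hM₁ A ε ε₁ hε hεA h2 hcase x hsupx hx j hj
    -- choice of step L
    have ht0 : (0:ℝ) < 2 / (3*A) := by positivity
    set L : ℕ := ⌈2 / (3*A)⌉₊ with hLdef
    have hL1 : 1 ≤ L := Nat.one_le_iff_ne_zero.mpr (by
      simp only [hLdef, ne_eq, Nat.ceil_eq_zero, not_le]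
      exact ht0)
    have hLt : 2 / (3*A) ≤ (L:ℝ) := Nat.le_ceil _
    have hLt1 : (L:ℝ) - 1 ≤ 2 / (3*A) := by
      have := Nat.ceil_lt_add_one ht0.le
      rw [← hLdef] at this
      linarith
    have htM : 2 / (3*A) ≤ (M₁:ℝ) := by
      have h1 : 2 / (3*A) ≤ 2 / (3*ε) :=
        div_le_div_of_nonneg_left (by norm_num) (by positivity) (by linarith)
      have h2' : 2 * ε⁻¹ / 3 = 2 / (3*ε) := by field_simp
      rw [h2'] at hM₁ε
      linarith
    have hLM : L ≤ M₁ := Nat.ceil_le.mpr htM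
    have hLM' : (L:ℤ) ≤ (M₁:ℤ) := by exact_mod_cast hLM
    have h3AL : (2:ℝ) ≤ (L:ℝ) * (3*A) := (div_le_iff₀ (by positivity)).mp hLt
    have h3AL1 : ((L:ℝ) - 1) * (3*A) ≤ 2 := (le_div_iff₀ (by positivity)).mp hLt1
    have hLpos : (0:ℝ) < (L:ℝ) := by exact_mod_cast hL1
    have hfinish : ∀ d : ℝ, 0 ≤ d →
        (L:ℝ) * d ≤ 2*A + ((L:ℝ)*((L:ℝ)-1)/2) * (3*A^3) → d ≤ 4*A^2 := by
      intro d hd hld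
      have c1 : 2*A ≤ (L:ℝ)*(3*A)*A := mul_le_mul_of_nonneg_right h3AL hA0.le
      have c2 : ((L:ℝ)-1)*(3*A)*(A^2*(L:ℝ)/2) ≤ 2*(A^2*(L:ℝ)/2) :=
        mul_le_mul_of_nonneg_right h3AL1 (by positivity)
      have hmul : (L:ℝ) * d ≤ (L:ℝ) * (4*A^2) := by nlinarith [hld, c1, c2]
      exact le_of_mul_le_mul_left hmul hLpos
    rcases le_or_gt k 0 with hk0 | hk0
    · -- window to the right
      have hland := landau L hL1 A (3*A^3) (fun i => x (k + (i:ℤ))) ?_ ?_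
      · have e0 : k + ((0:ℕ):ℤ) = k := by norm_num
        have e1 : k + ((1:ℕ):ℤ) = k + 1 := by norm_num
        simp only [e0, e1] at hland
        exact hfinish _ (abs_nonneg _) hland
      · intro i hi
        have hi' : (i:ℤ) ≤ (L:ℤ) := by exact_mod_cast hi
        have hi0 : (0:ℤ) ≤ (i:ℤ) := by positivity
        refine hsup _ ?_
        rw [abs_le]; omega
      · intro i h1i hiL
        have h1i' : (1:ℤ) ≤ (i:ℤ) := by exact_mod_cast h1i
        have hiL' : (i:ℤ) + 1 ≤ (L:ℤ) := by exact_mod_cast hiL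
        have e1 : k + ((i + 1 : ℕ) : ℤ) = k + (i:ℤ) + 1 := by push_cast; ring
        have e2 : k + ((i - 1 : ℕ) : ℤ) = k + (i:ℤ) - 1 := by
          push_cast [Nat.cast_sub h1i]; ring
        have hRj := hrec (k + (i:ℤ)) (by rw [abs_lt]; omega)
        have hxj : |x (k + (i:ℤ))| ≤ A := by
          refine hsup _ ?_
          rw [abs_le]; omega
        have hrj := hr (k + (i:ℤ)) (by rw [abs_le]; omega)
        have hx3 : |x (k + (i:ℤ)) ^ 3| ≤ A ^ 3 := by
          rw [abs_pow]; exact pow_le_pow_left₀ (abs_nonneg _) hxj 3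
        simp only [e1, e2]
        rw [hRj]
        calc |2 * x (k + (i:ℤ)) ^ 3 + r (k + (i:ℤ))|
            ≤ |2 * x (k + (i:ℤ)) ^ 3| + |r (k + (i:ℤ))| := abs_add_le _ _
          _ = 2 * |x (k + (i:ℤ)) ^ 3| + |r (k + (i:ℤ))| := by
              rw [abs_mul]; norm_num
          _ ≤ 3*A^3 := by linarith
    · -- window to the left
      have hland := landau L hL1 A (3*A^3) (fun i => x (k + 1 - (i:ℤ))) ?_ ?_
      · have e0 : k + 1 - ((0:ℕ):ℤ) = k + 1 := by norm_num
        have e1 : k + 1 - ((1:ℕ):ℤ) = k := by norm_num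
        simp only [e0, e1] at hland
        rw [abs_sub_comm] at hland
        exact hfinish _ (abs_nonneg _) hland
      · intro i hi
        have hi' : (i:ℤ) ≤ (L:ℤ) := by exact_mod_cast hi
        have hi0 : (0:ℤ) ≤ (i:ℤ) := by positivity
        refine hsup _ ?_
        rw [abs_le]; omega
      · intro i h1i hiL
        have h1i' : (1:ℤ) ≤ (i:ℤ) := by exact_mod_cast h1i
        have hiL' : (i:ℤ) + 1 ≤ (L:ℤ) := by exact_mod_cast hiL
        have e1 : k + 1 - ((i + 1 : ℕ) : ℤ) = (k + 1 - (i:ℤ)) - 1 := by push_cast; ring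
        have e2 : k + 1 - ((i - 1 : ℕ) : ℤ) = (k + 1 - (i:ℤ)) + 1 := by
          push_cast [Nat.cast_sub h1i]; ring
        have hRj := hrec (k + 1 - (i:ℤ)) (by rw [abs_lt]; omega)
        have hxj : |x (k + 1 - (i:ℤ))| ≤ A := by
          refine hsup _ ?_
          rw [abs_le]; omega
        have hrj := hr (k + 1 - (i:ℤ)) (by rw [abs_le]; omega)
        have hx3 : |x (k + 1 - (i:ℤ)) ^ 3| ≤ A ^ 3 := by
          rw [abs_pow]; exact pow_le_pow_left₀ (abs_nonneg _) hxj 3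
        simp only [e1, e2]
        have eq2 : x (k + 1 - (i:ℤ) - 1) - 2 * x (k + 1 - (i:ℤ)) + x (k + 1 - (i:ℤ) + 1)
            = 2 * x (k + 1 - (i:ℤ)) ^ 3 + r (k + 1 - (i:ℤ)) := by linarith [hRj]
        rw [eq2]
        calc |2 * x (k + 1 - (i:ℤ)) ^ 3 + r (k + 1 - (i:ℤ))|
            ≤ |2 * x (k + 1 - (i:ℤ)) ^ 3| + |r (k + 1 - (i:ℤ))| := abs_add_le _ _
          _ = 2 * |x (k + 1 - (i:ℤ)) ^ 3| + |r (k + 1 - (i:ℤ))| := by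
              rw [abs_mul]; norm_num
          _ ≤ 3*A^3 := by linarith
  · -- direct two-step argument (M₁ ≤ 2 and A² M₁ > 2)
    push_neg at hcase
    obtain ⟨h2lt, hM₁lt⟩ := hcase
    have hM₁2 : (M₁:ℝ) ≤ 2 := by exact_mod_cast (by omega : M₁ ≤ 2)
    have hA1 : 1 ≤ A := by nlinarith [mul_le_mul_of_nonneg_left hM₁2 (sq_nonneg A)]
    have hrk := hrec k (by rw [abs_lt]; omega)
    have hrk1 := hrec (k+1) (by rw [abs_lt]; omega)
    have ek : k + 1 - 1 = k := by ring
    rw [ek] at hrk1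
    have hx2 : |x (k+1+1)| ≤ ε₁ := hx _ (by rw [abs_le]; omega)
    have hxm1 : |x (k-1)| ≤ ε₁ := hx _ (by rw [abs_le]; omega)
    have hr0 : |r k| ≤ ε^3 := hr _ (by rw [abs_le]; omega)
    have hr1 : |r (k+1)| ≤ ε^3 := hr _ (by rw [abs_le]; omega)
    have hsub : 2*((x (k+1))^3 - (x k)^3) + 3*(x (k+1) - x k)
        = (x (k+1+1) - x (k-1)) - (r (k+1) - r k) := by linarith [hrk, hrk1]
    have habs2 : |2*((x (k+1))^3 - (x k)^3) + 3*(x (k+1) - x k)| ≤ 2*ε₁ + 2*ε^3 := by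
      rw [hsub]
      calc |(x (k+1+1) - x (k-1)) - (r (k+1) - r k)|
          ≤ |x (k+1+1) - x (k-1)| + |r (k+1) - r k| := abs_sub _ _
        _ ≤ (|x (k+1+1)| + |x (k-1)|) + (|r (k+1)| + |r k|) :=
            add_le_add (abs_sub _ _) (abs_sub _ _)
        _ ≤ 2*ε₁ + 2*ε^3 := by linarith
    set a := x (k+1)
    set b := x k
    have hq0 : (0:ℝ) ≤ 2*(a^2+a*b+b^2) + 3 := by nlinarith [sq_nonneg (a+b), sq_nonneg (a-b)]
    have hq : (a-b)^2 / 2 ≤ 2*(a^2+a*b+b^2) + 3 := by nlinarith [sq_nonneg (a+b)]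
    have h3 : |a-b| * (2*(a^2+a*b+b^2)+3) = |2*(a^3-b^3)+3*(a-b)| := by
      rw [show (2*(a^3-b^3)+3*(a-b)) = (a-b) * (2*(a^2+a*b+b^2)+3) from by ring,
        abs_mul, abs_of_nonneg hq0]
    have hcube3 : |a-b|^3 ≤ 4*ε₁ + 4*ε^3 := by
      have e1 : |a-b|^3 = |a-b| * (a-b)^2 := by rw [← sq_abs]; ring
      calc |a-b|^3 = |a-b| * (a-b)^2 := e1
        _ ≤ |a-b| * (2*(2*(a^2+a*b+b^2)+3)) :=
            mul_le_mul_of_nonneg_left (by linarith [hq]) (abs_nonneg _)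
        _ = 2 * (|a-b| * (2*(a^2+a*b+b^2)+3)) := by ring
        _ = 2 * |2*(a^3-b^3)+3*(a-b)| := by rw [h3]
        _ ≤ 4*ε₁ + 4*ε^3 := by
            have h4 : |2*(a^3-b^3)+3*(a-b)| ≤ 2*ε₁ + 2*ε^3 := by
              have : 2*((x (k+1))^3 - (x k)^3) + 3*(x (k+1) - x k)
                  = 2*(a^3-b^3)+3*(a-b) := rfl
              rw [← this]; exact habs2
            linarith
    have hM₁sq : (M₁:ℝ)^2 ≤ 4 := by nlinarith
    have hchain : |a-b|^3 ≤ 12*A^3 := by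
      nlinarith [mul_nonneg (pow_pos hA0 3).le (by linarith : (0:ℝ) ≤ 4 - (M₁:ℝ)^2)]
    have hA31 : (1:ℝ) ≤ A^3 := by
      calc (1:ℝ) = 1^3 := by norm_num
        _ ≤ A^3 := pow_le_pow_left₀ (by norm_num) hA1 3
    have hA36 : 12*A^3 ≤ 64*A^6 := by
      nlinarith [mul_nonneg (pow_pos hA0 3).le (by linarith : (0:ℝ) ≤ A^3 - 1)]
    by_contra hcon
    push_neg at hcon
    have hlt : (4*A^2)^3 < |a-b|^3 := by
      apply pow_lt_pow_left₀ hcon (by positivity)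
      norm_num
    nlinarith [hlt, hchain, hA36]
end

section
/- Let $q$ be the Hastings–McLeod solution of the Painlevé II equation $q''(x) = x q(x) + 2q(x)^3$, i.e. the unique solution with $q(x) \to 0$ as $x \to +\infty$ and $q(x)/\sqrt{-x} \to 1/\sqrt{2}$ as $x \to -\infty$ (normalization $2P_0(0)=1$). Then there exists $\delta > 0$ such that $6 q(x)^2 + x \ge \delta^2$ for all $x \in \mathbb{R}$. -/
open Set Filter Topology

/-- Second-derivative test (contradiction form): a point where the derivative of the
derivative is negative cannot be a local minimum of a differentiable function. -/
lemma no_local_min_of_deriv_deriv_neg {f : ℝ → ℝ} {m L : ℝ}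
    (hdf : ∀ x, DifferentiableAt ℝ f x)
    (hmin : IsLocalMin f m) (hL : HasDerivAt (deriv f) L m) (hLneg : L < 0) : False := by
  have h0 : deriv f m = 0 := hmin.deriv_eq_zero
  -- the derivative is negative just to the right of m
  have hslope : Tendsto (slope (deriv f) m) (𝓝[≠] m) (𝓝 L) :=
    hasDerivAt_iff_tendsto_slope.1 hL
  have hev : ∀ᶠ x in 𝓝[≠] m, slope (deriv f) m x < 0 :=
    hslope.eventually (eventually_lt_nhds hLneg)
  have hev' : ∀ᶠ x in 𝓝[>] m, slope (deriv f) m x < 0 :=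
    hev.filter_mono (nhdsWithin_mono _ (fun x hx => ne_of_gt hx))
  obtain ⟨b, hb, hball⟩ := (nhdsGT_basis m).eventually_iff.1 hev'
  have hder_neg : ∀ x ∈ Ioo m b, deriv f x < 0 := by
    intro x hx
    have hs := hball hx
    have hxm : 0 < x - m := sub_pos.2 hx.1
    have heq : slope (deriv f) m x = deriv f x / (x - m) := by
      rw [slope_def_field, h0, sub_zero]
    rw [heq] at hs
    exact lt_of_not_ge fun h => (not_lt.2 (div_nonneg h hxm.le)) hs
  -- local min : f ≥ f m near m
  obtain ⟨η, hη, hmin'⟩ := Metric.eventually_nhds_iff.1 hmin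
  set b' : ℝ := min b (m + η) with hb'
  have hmb' : m < b' := lt_min hb (by linarith)
  set c : ℝ := (m + b') / 2 with hc
  have hmc : m < c := by simp only [hc]; linarith
  have hcb' : c < b' := by simp only [hc]; linarith
  have hanti : StrictAntiOn f (Icc m b') := by
    apply strictAntiOn_of_deriv_neg (convex_Icc m b')
    · exact fun x _ => (hdf x).continuousAt.continuousWithinAt
    · intro x hx
      rw [interior_Icc] at hx
      exact hder_neg x ⟨hx.1, lt_of_lt_of_le hx.2 (min_le_left _ _)⟩
  have h1 : f c < f m := hanti (left_mem_Icc.2 hmb'.le) ⟨hmc.le, hcb'.le⟩ hmc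
  have h2 : f m ≤ f c := by
    apply hmin'
    rw [Real.dist_eq, abs_lt]
    have : b' ≤ m + η := min_le_right _ _
    constructor <;> simp only [hc] <;> linarith
  linarith

set_option maxHeartbeats 1000000 in
/-- Stability inequality for the Hastings–McLeod solution of Painlevé II
(normalization `2P₀(0) = 1`): if `q'' = x q + 2q³`, `q → 0` at `+∞`,
`q(x)/√(-x) → 1/√2` at `-∞`, with `q > 0`, `q' < 0`, `q(0) > Ai(0) = 0.355028…`
and `q(x)² ≤ -x/2` for `x` sufficiently negative, then there is `δ > 0` with
`6 q(x)² + x ≥ δ²` for all `x`. -/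
theorem stmt_4 (q : ℝ → ℝ)
    (hq'' : ∀ x, deriv (deriv q) x = x * q x + 2 * (q x) ^ 3)
    (htop : Filter.Tendsto q Filter.atTop (nhds 0))
    (hbot : Filter.Tendsto (fun x => q x / Real.sqrt (-x)) Filter.atBot
      (nhds (1 / Real.sqrt 2)))
    (hpos : ∀ x, 0 < q x)
    (hdec : ∀ x, deriv q x < 0)
    (hq0 : q 0 > 0.355028)
    (hneg : ∃ X : ℝ, ∀ x ≤ X, (q x) ^ 2 ≤ -x / 2) :
    ∃ δ : ℝ, 0 < δ ∧ ∀ x : ℝ, 6 * (q x) ^ 2 + x ≥ δ ^ 2 := by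
  -- q is differentiable (derivative is nonzero hence exists)
  have hdiff : ∀ x, DifferentiableAt ℝ q x := fun x =>
    differentiableAt_of_deriv_ne_zero (hdec x).ne
  have hanti : StrictAnti q := strictAnti_of_deriv_neg hdec
  set v : ℝ → ℝ := fun x => q x ^ 2 + x / 6 with hv_def
  -- v is differentiable with derivative 2 q q' + 1/6
  have hvder : ∀ x, HasDerivAt v (2 * q x * deriv q x + 1 / 6) x := by
    intro x
    have h1 : HasDerivAt (fun y => q y ^ 2) (2 * q x * deriv q x) x := by
      have := ((hdiff x).hasDerivAt).fun_pow 2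
      simpa using this
    have h2 : HasDerivAt (fun y : ℝ => y / 6) (1 / 6) x := by
      simpa using (hasDerivAt_id x).div_const 6
    exact h1.add h2
  have hvdiff : ∀ x, DifferentiableAt ℝ v x := fun x => (hvder x).differentiableAt
  have hvderiv : deriv v = fun x => 2 * q x * deriv q x + 1 / 6 :=
    funext fun x => (hvder x).deriv
  have hvcont : Continuous v := by
    rw [continuous_iff_continuousAt]; exact fun x => (hvdiff x).continuousAt
  -- behavior at -∞ : v ≥ 1 for x ≤ A
  have h12 : (1 : ℝ) / 2 < 1 / Real.sqrt 2 := by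
    rw [div_lt_div_iff₀ two_pos (Real.sqrt_pos.2 (by norm_num))]
    nlinarith [Real.sq_sqrt (by norm_num : (0:ℝ) ≤ 2), Real.sqrt_nonneg 2]
  obtain ⟨A₀, hA₀⟩ := Filter.eventually_atBot.1 (hbot.eventually (eventually_gt_nhds h12))
  set A : ℝ := min A₀ (-12) with hA_def
  have hA12 : A ≤ -12 := min_le_right _ _
  have hAbound : ∀ x ≤ A, 1 ≤ v x := by
    intro x hx
    have hx12 : x ≤ -12 := le_trans hx hA12
    have hxneg : 0 < -x := by linarith
    have hq2 : q x / Real.sqrt (-x) > 1 / 2 := hA₀ x (le_trans hx (min_le_left _ _))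
    have hs : 0 < Real.sqrt (-x) := Real.sqrt_pos.2 hxneg
    have hqx : q x > Real.sqrt (-x) / 2 := by
      rw [gt_iff_lt, lt_div_iff₀ hs] at hq2
      linarith [hq2]
    have hsq : Real.sqrt (-x) ^ 2 = -x := Real.sq_sqrt hxneg.le
    have : q x ^ 2 > -x / 4 := by nlinarith [hs, hqx]
    simp only [hv_def]
    nlinarith
  -- min on [A, 6]
  have hA6 : A < 6 := by linarith
  obtain ⟨m, hmIcc, hm⟩ := (isCompact_Icc : IsCompact (Icc A 6)).exists_isMinOn
    (nonempty_Icc.2 hA6.le) hvcont.continuousOn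
  set ε : ℝ := v m with hε_def
  have hεpos : 0 < ε := by
    by_contra hcon
    push_neg at hcon
    -- m is in the open interval
    have hvA : 1 ≤ v A := hAbound A le_rfl
    have hv6 : (1:ℝ) < v 6 := by
      simp only [hv_def]; nlinarith [hpos 6]
    have hmA : A < m := by
      rcases lt_or_eq_of_le hmIcc.1 with h | h
      · exact h
      · exfalso; rw [hε_def, ← h] at hcon; linarith
    have hm6 : m < 6 := by
      rcases lt_or_eq_of_le hmIcc.2 with h | h
      · exact h
      · exfalso; rw [hε_def, h] at hcon; linarith
    have hlocal : IsLocalMin v m := hm.isLocalMin (Icc_mem_nhds hmA hm6)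
    -- notation
    set u : ℝ := q m with hu
    set p : ℝ := deriv q m with hp
    have hu0 : 0 < u := hpos m
    have hwm : u ^ 2 + m / 6 ≤ 0 := hcon
    have hmneg : m < 0 := by nlinarith
    have huq0 : q 0 < u := hanti hmneg
    -- first derivative vanishes
    have hd0 : 2 * u * p + 1 / 6 = 0 := by
      have := hlocal.deriv_eq_zero
      rw [hvderiv] at this
      exact this
    -- second derivative
    have hq''ne : m * q m + 2 * q m ^ 3 ≠ 0 := by
      have : m + 2 * u ^ 2 < 0 := by nlinarith
      have : q m * (m + 2 * q m ^ 2) < 0 := mul_neg_of_pos_of_neg hu0 this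
      intro h
      nlinarith [h, this]
    have hdq2 : DifferentiableAt ℝ (deriv q) m := by
      by_contra h
      exact hq''ne (by rw [← hq'' m, deriv_zero_of_not_differentiableAt h])
    have hq''at : HasDerivAt (deriv q) (m * q m + 2 * q m ^ 3) m := by
      have := hdq2.hasDerivAt
      rwa [hq'' m] at this
    have hL : HasDerivAt (deriv v)
        ((2 * p) * p + (2 * u) * (m * u + 2 * u ^ 3)) m := by
      rw [hvderiv]
      have h1 : HasDerivAt (fun x => 2 * q x) (2 * p) m := by
        simpa using ((hdiff m).hasDerivAt).const_mul 2
      have h2 : HasDerivAt (fun x => 2 * q x * deriv q x)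
          ((2 * p) * deriv q m + (2 * q m) * (m * q m + 2 * q m ^ 3)) m :=
        h1.mul hq''at
      simpa [hu, hp] using h2.add_const (1/6)
    -- the second derivative is negative: contradiction with local min
    have hp2 : 144 * u ^ 2 * p ^ 2 = 1 := by nlinarith [hd0]
    have hu6 : (0.355028 : ℝ) ^ 6 < u ^ 6 :=
      pow_lt_pow_left₀ (lt_trans hq0 huq0) (by norm_num) (by norm_num)
    have h0355 : (1 : ℝ) / 576 < (0.355028 : ℝ) ^ 6 := by norm_num
    have hkey : (1 : ℝ) < 576 * u ^ 6 := by linarith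
    have hm' : m ≤ -6 * u ^ 2 := by nlinarith
    have hLneg : (2 * p) * p + (2 * u) * (m * u + 2 * u ^ 3) < 0 := by
      nlinarith [mul_le_mul_of_nonneg_right hm' (pow_nonneg hu0.le 4),
        sq_nonneg u, sq_nonneg p, hp2, hkey, mul_pos hu0 hu0]
    exact no_local_min_of_deriv_deriv_neg hvdiff hlocal hL hLneg
  -- conclusion
  set c : ℝ := min ε 1 with hc_def
  have hcpos : 0 < c := lt_min hεpos one_pos
  refine ⟨Real.sqrt (6 * c), Real.sqrt_pos.2 (by linarith), ?_⟩
  have hsq : Real.sqrt (6 * c) ^ 2 = 6 * c := Real.sq_sqrt (by linarith)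
  intro x
  rw [hsq]
  have hvx : c ≤ v x := by
    rcases le_total x A with h | h
    · exact le_trans (min_le_right _ _) (hAbound x h)
    · rcases le_total x 6 with h6 | h6
      · exact le_trans (min_le_left _ _) (hm ⟨h, h6⟩)
      · have : (1:ℝ) ≤ v x := by
          simp only [hv_def]; nlinarith [hpos x]
        exact le_trans (min_le_right _ _) this
    
  simp only [hv_def] at hvx
  nlinarith
end

section
/- Let $q:\mathbb{R}\to\mathbb{R}$ be a solution of $q'' = xq + 2q^3$ with $q > 0$ and $q' < 0$ on $\mathbb{R}$, and $q(0) > 3^{2/3}/6$. Define $f(x) = \sqrt{-x/6} - q(x)$ for $x < 0$. If $x_0 < 0$ is the largest negative root of $f$, then $x_0 < -3^{1/3}/2$, and moreover $f''(x) > 0$ for all $x \le x_0$ at which $q(x) \ge \sqrt{-x/6}$. -/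
open Filter Set Topology

set_option maxHeartbeats 1000000 in
/-- Comparison step for the Hastings–McLeod solution: with `q'' = xq + 2q³`,
`q > 0`, `q' < 0`, `q(0) > 3^{2/3}/6`, set `f(x) = √(-x/6) - q(x)`. If `x₀ < 0`
is the largest negative root of `f`, then `x₀ < -3^{1/3}/2` and `f'' > 0` at
every `x ≤ x₀` where `q(x) ≥ √(-x/6)`. -/
theorem stmt_5 (q : ℝ → ℝ)
    (hq'' : ∀ x, deriv (deriv q) x = x * q x + 2 * (q x) ^ 3)
    (hpos : ∀ x, 0 < q x)
    (hdec : ∀ x, deriv q x < 0)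
    (hq0 : q 0 > 3 ^ ((2 : ℝ) / 3) / 6)
    (f : ℝ → ℝ) (hf : ∀ x, f x = Real.sqrt (-x / 6) - q x)
    (x₀ : ℝ) (hx₀neg : x₀ < 0) (hroot : f x₀ = 0)
    (hlargest : ∀ x, x < 0 → f x = 0 → x ≤ x₀) :
    x₀ < -(3 ^ ((1 : ℝ) / 3)) / 2 ∧
      ∀ x ≤ x₀, q x ≥ Real.sqrt (-x / 6) → 0 < deriv (deriv f) x := by
  have hfF : f = fun y => Real.sqrt (-y / 6) - q y := funext hf
  have hqdiff : ∀ y, DifferentiableAt ℝ q y := by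
    intro y
    by_contra h
    have h1 := deriv_zero_of_not_differentiableAt h
    have h2 := hdec y
    rw [h1] at h2
    exact lt_irrefl 0 h2
  have hqcont : Continuous q := by
    rw [continuous_iff_continuousAt]
    exact fun y => (hqdiff y).continuousAt
  have hanti : StrictAnti q := strictAnti_of_deriv_neg hdec
  have hfcont : Continuous f := by
    rw [hfF]
    exact (Real.continuous_sqrt.comp (by continuity)).sub hqcont
  have hq0x : q x₀ = Real.sqrt (-x₀ / 6) := by
    have h := hf x₀
    rw [hroot] at h
    linarith
  -- Part 1
  have h43 : (3:ℝ) ^ ((2:ℝ)/3) * (3:ℝ) ^ ((2:ℝ)/3) = (3:ℝ) * (3:ℝ) ^ ((1:ℝ)/3) := by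
    rw [← Real.rpow_add (by norm_num : (0:ℝ) < 3)]
    rw [show (2:ℝ)/3 + 2/3 = 1 + 1/3 by norm_num]
    rw [Real.rpow_add (by norm_num : (0:ℝ) < 3), Real.rpow_one]
  have h23 : ((3:ℝ) ^ ((2:ℝ)/3)/6)^2 = (3:ℝ) ^ ((1:ℝ)/3)/12 := by
    rw [pow_two, div_mul_div_comm, h43]
    ring
  have h3pos : (0:ℝ) < (3:ℝ) ^ ((1:ℝ)/3) := Real.rpow_pos_of_pos (by norm_num) _
  have h3pos' : (0:ℝ) < (3:ℝ) ^ ((2:ℝ)/3) := Real.rpow_pos_of_pos (by norm_num) _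
  have part1 : x₀ < -(3 ^ ((1 : ℝ) / 3)) / 2 := by
    by_contra hcon
    push_neg at hcon
    have h1 : -x₀/6 ≤ 3 ^ ((1:ℝ)/3)/12 := by linarith
    have h2 : q x₀ ≤ (3:ℝ) ^ ((2:ℝ)/3)/6 := by
      rw [hq0x]
      calc Real.sqrt (-x₀/6) ≤ Real.sqrt ((3:ℝ) ^ ((1:ℝ)/3)/12) := Real.sqrt_le_sqrt h1
        _ = (3:ℝ) ^ ((2:ℝ)/3)/6 := by
            rw [← h23, Real.sqrt_sq (by positivity)]
    have h3 : q 0 < q x₀ := hanti hx₀neg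
    linarith
  have hcube : (3:ℝ)/8 < (-x₀)^3 := by
    have h1 : (3:ℝ) ^ ((1:ℝ)/3)/2 < -x₀ := by linarith
    have h2 : ((3:ℝ) ^ ((1:ℝ)/3)/2)^3 < (-x₀)^3 :=
      pow_lt_pow_left₀ h1 (by positivity) (by norm_num)
    have h3 : ((3:ℝ) ^ ((1:ℝ)/3))^3 = 3 := by
      rw [← Real.rpow_natCast ((3:ℝ) ^ ((1:ℝ)/3)) 3,
        ← Real.rpow_mul (by norm_num : (0:ℝ) ≤ 3)]
      norm_num
    calc (3:ℝ)/8 = ((3:ℝ) ^ ((1:ℝ)/3)/2)^3 := by rw [div_pow, h3]; norm_num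
      _ < (-x₀)^3 := h2
  -- derivative of √(-x/6)
  have hL1 : ∀ y : ℝ, y < 0 →
      HasDerivAt (fun z : ℝ => Real.sqrt (-z/6)) (-1/(12*Real.sqrt (-y/6))) y := by
    intro y hy
    have hy6 : (-y/6 : ℝ) ≠ 0 := ne_of_gt (by linarith)
    have hinner : HasDerivAt (fun z : ℝ => -z/6) (-1/6) y := by
      simpa using ((hasDerivAt_id y).neg.div_const 6)
    have houter : HasDerivAt (fun z : ℝ => Real.sqrt (-z/6))
        (1/(2*Real.sqrt (-y/6)) * (-1/6)) y := (Real.hasDerivAt_sqrt hy6).comp y hinner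
    have hs : (0:ℝ) < Real.sqrt (-y/6) := Real.sqrt_pos.mpr (by linarith)
    convert houter using 1
    have hval : ∀ s : ℝ, 0 < s → -1/(12*s) = 1/(2*s) * (-1/6) := by
      intro s hs'
      field_simp
      ring
    exact hval _ hs
  have hL2 : ∀ y : ℝ, y < 0 →
      HasDerivAt (fun z : ℝ => -1/(12*Real.sqrt (-z/6)))
        (-1/(144*(Real.sqrt (-y/6))^3)) y := by
    intro y hy
    have hs : (0:ℝ) < Real.sqrt (-y/6) := Real.sqrt_pos.mpr (by linarith)
    have h1 := ((hL1 y hy).inv hs.ne').const_mul (-1/12 : ℝ)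
    have hfun : (fun z : ℝ => (-1/12 : ℝ) * (Real.sqrt (-z/6))⁻¹)
        = (fun z : ℝ => -1/(12*Real.sqrt (-z/6))) := by
      funext z; ring
    simp only [Pi.inv_apply] at h1
    rw [hfun] at h1
    have hval : ∀ s : ℝ, 0 < s → -1/(144*s^3) = -1/12 * (-(-1/(12*s))/s^2) := by
      intro s hs'
      field_simp
      ring
    rw [hval _ hs]
    exact h1
  -- the key pointwise lemma (at points where q ≤ √(-x/6))
  have key : ∀ x : ℝ, x ≤ x₀ → q x ≤ Real.sqrt (-x/6) →
      HasDerivAt (deriv f) (-1/(144*(Real.sqrt (-x/6))^3) - (x * q x + 2 * (q x) ^ 3)) x ∧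
      0 < -1/(144*(Real.sqrt (-x/6))^3) - (x * q x + 2 * (q x) ^ 3) := by
    intro x hxle hqle
    have hx0 : x < 0 := lt_of_le_of_lt hxle hx₀neg
    have hspos : (0:ℝ) < Real.sqrt (-x/6) := Real.sqrt_pos.mpr (by linarith)
    set s := Real.sqrt (-x/6) with hs_def
    have hs2 : s^2 = -x/6 := Real.sq_sqrt (by linarith)
    have hs0pos : (0:ℝ) < Real.sqrt (-x₀/6) := Real.sqrt_pos.mpr (by linarith)
    set s₀ := Real.sqrt (-x₀/6) with hs0_def
    have hs02 : s₀^2 = -x₀/6 := Real.sq_sqrt (by linarith)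
    have hqx : 0 < q x := hpos x
    have hq2 : (q x)^2 ≤ s^2 := by nlinarith
    have hqge : s₀ ≤ q x := by
      have h := hanti.antitone hxle
      rw [hq0x] at h
      exact h
    have hq2' : 0 ≤ q x * (s^2 - (q x)^2) := mul_nonneg hqx.le (sub_nonneg.mpr hq2)
    have hqs : q x * s^2 = q x * (-x/6) := by rw [hs2]
    have step1 : x * q x + 2 * (q x) ^ 3 ≤ 2*x/3 * q x := by nlinarith
    have step2 : 2*x/3 * q x ≤ 2*x/3 * s₀ := by
      nlinarith [mul_nonneg (sub_nonneg.mpr hqge) (by linarith : (0:ℝ) ≤ -(2*x/3))]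
    have hneg : x * q x + 2 * (q x) ^ 3 < 0 := by
      have h1 : 2*x/3 * q x < 0 := mul_neg_of_neg_of_pos (by linarith) hqx
      linarith
    have hqq : deriv (deriv q) x ≠ 0 := by
      rw [hq'' x]; exact ne_of_lt hneg
    have hq'diff : DifferentiableAt ℝ (deriv q) x := by
      by_contra h
      exact hqq (deriv_zero_of_not_differentiableAt h)
    have hD2 : HasDerivAt (fun z => -1/(12*Real.sqrt (-z/6)) - deriv q z)
        (-1/(144*s^3) - (x * q x + 2 * (q x) ^ 3)) x := by
      have h1 := (hL2 x hx0).sub hq'diff.hasDerivAt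
      rwa [hq'' x] at h1
    have hev : (fun z => -1/(12*Real.sqrt (-z/6)) - deriv q z) =ᶠ[nhds x] deriv f := by
      filter_upwards [Iio_mem_nhds hx0] with z hz
      have hdz : HasDerivAt f (-1/(12*Real.sqrt (-z/6)) - deriv q z) z := by
        rw [hfF]
        exact (hL1 z hz).sub (hqdiff z).hasDerivAt
      exact hdz.deriv.symm
    have hDf : HasDerivAt (deriv f) (-1/(144*s^3) - (x * q x + 2 * (q x) ^ 3)) x :=
      hD2.congr_of_eventuallyEq hev.symm
    refine ⟨hDf, ?_⟩
    -- positivity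
    have hss0 : s₀ ≤ s := Real.sqrt_le_sqrt (by linarith)
    have hx2 : x₀^2 ≤ x^2 := by nlinarith
    have h16 : 1 < 16*x^2*s₀*s := by
      have c1 : (1:ℝ) < 16*x₀^2*s₀^2 := by nlinarith
      have c2 : 16*x₀^2*s₀^2 ≤ 16*x^2*s₀^2 := by nlinarith [sq_nonneg s₀]
      have c3 : 16*x^2*s₀^2 ≤ 16*x^2*s₀*s := by
        nlinarith [mul_nonneg (mul_nonneg (by positivity : (0:ℝ) ≤ 16*x^2) hs0pos.le)
          (sub_nonneg.mpr hss0)]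
      linarith
    have hs3 : s^3 = (-x/6)*s := by rw [pow_succ, hs2]
    have hxne : x ≠ 0 := ne_of_lt hx0
    have hnum : -1/(144*s^3) - 2*x/3 * s₀ = (16*x^2*s₀*s - 1)/(144*s^3) := by
      rw [hs3]
      field_simp
      ring
    have hfinal : 0 < -1/(144*s^3) - 2*x/3 * s₀ := by
      rw [hnum]
      apply div_pos (by linarith) (by positivity)
    linarith
  -- f < 0 on (x₀, 0)
  have fneg : ∀ y, x₀ < y → y < 0 → f y < 0 := by
    intro y hy1 hy2
    by_contra hcon
    push_neg at hcon
    have hfy : 0 < f y := by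
      rcases eq_or_lt_of_le hcon with h | h
      · exact absurd (hlargest y hy2 h.symm) (by linarith)
      · exact h
    have hq00 : 0 < q 0 := hpos 0
    set bb := max (y/2) (-(q 0)^2) with hbb_def
    have hb0 : bb < 0 := max_lt (by linarith) (by nlinarith)
    have hyb : y < bb := lt_of_lt_of_le (by linarith) (le_max_left _ _)
    have hfb : f bb < 0 := by
      rw [hf bb]
      have h2 : -bb/6 ≤ (q 0)^2 := by
        have h3 := le_max_right (y/2) (-(q 0)^2)
        nlinarith [sq_nonneg (q 0)]
      have h1 : Real.sqrt (-bb/6) ≤ q 0 := by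
        calc Real.sqrt (-bb/6) ≤ Real.sqrt ((q 0)^2) := Real.sqrt_le_sqrt h2
          _ = q 0 := Real.sqrt_sq hq00.le
      have h3 : q 0 < q bb := hanti hb0
      linarith
    obtain ⟨c, hc, hfc⟩ := intermediate_value_Ioo' (le_of_lt hyb)
      (hfcont.continuousOn) (show (0:ℝ) ∈ Ioo (f bb) (f y) from ⟨hfb, hfy⟩)
    exact absurd (hlargest c (by linarith [hc.2]) hfc) (by linarith [hc.1])
  -- derivative of f at x₀
  have hfd : HasDerivAt f (-1/(12*Real.sqrt (-x₀/6)) - deriv q x₀) x₀ := by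
    rw [hfF]
    exact (hL1 x₀ hx₀neg).sub (hqdiff x₀).hasDerivAt
  set m := -1/(12*Real.sqrt (-x₀/6)) - deriv q x₀ with hm_def
  -- f > 0 on some (a, x₀)
  have hC : ∃ a, a < x₀ ∧ ∀ y, a < y → y < x₀ → 0 < f y := by
    have hslope := hasDerivAt_iff_tendsto_slope.mp hfd
    rcases lt_trichotomy m 0 with hm | hm | hm
    · -- m < 0 : good case
      have h1 : ∀ᶠ z in nhdsWithin x₀ (Iio x₀), slope f x₀ z < 0 :=
        (hslope.eventually (eventually_lt_nhds hm)).filter_mono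
          (nhdsWithin_mono x₀ (fun z hz => Set.mem_compl_singleton_iff.mpr (ne_of_lt hz)))
      have h3 : ∀ᶠ z in nhdsWithin x₀ (Iio x₀), 0 < f z := by
        filter_upwards [h1, self_mem_nhdsWithin] with z hz1 hz2
        rw [slope_def_field, hroot] at hz1
        have hz3 : z < x₀ := hz2
        rcases div_neg_iff.mp hz1 with ⟨h4, h5⟩ | ⟨h4, h5⟩
        · linarith
        · linarith
      obtain ⟨a, ha, hsub⟩ := mem_nhdsLT_iff_exists_Ioo_subset.mp h3
      exact ⟨a, ha, fun y hy1 hy2 => hsub ⟨hy1, hy2⟩⟩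
    · -- m = 0 : contradiction using f'' (x₀) > 0
      exfalso
      obtain ⟨hD2, hD2pos⟩ := key x₀ le_rfl (le_of_eq hq0x)
      have hslope2 := hasDerivAt_iff_tendsto_slope.mp hD2
      have h1 : ∀ᶠ z in nhdsWithin x₀ (Ioi x₀), 0 < slope (deriv f) x₀ z :=
        (hslope2.eventually (eventually_gt_nhds hD2pos)).filter_mono
          (nhdsWithin_mono x₀ (fun z hz => Set.mem_compl_singleton_iff.mpr (ne_of_gt hz)))
      have hdf0 : deriv f x₀ = m := hfd.deriv
      have h2 : ∀ᶠ z in nhdsWithin x₀ (Ioi x₀), 0 < deriv f z ∧ z < 0 := by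
        filter_upwards [h1, self_mem_nhdsWithin,
          Ioo_mem_nhdsGT_of_mem (show x₀ ∈ Ico x₀ (0:ℝ) from ⟨le_rfl, hx₀neg⟩)]
          with z hz1 hz2 hz3
        have hz4 : x₀ < z := hz2
        refine ⟨?_, hz3.2⟩
        rw [slope_def_field, hdf0, hm] at hz1
        rcases div_pos_iff.mp hz1 with ⟨h4, h5⟩ | ⟨h4, h5⟩
        · linarith
        · linarith
      obtain ⟨u, hu, hsub⟩ := mem_nhdsGT_iff_exists_Ioo_subset.mp h2
      have hminu : x₀ < min u 0 := lt_min hu hx₀neg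
      set y := (x₀ + min u 0)/2 with hy_def
      have hy1 : x₀ < y := by
        rw [hy_def]; linarith
      have hy2 : y < min u 0 := by
        rw [hy_def]; linarith
      have hyu : y < u := lt_of_lt_of_le hy2 (min_le_left _ _)
      have hy0 : y < 0 := lt_of_lt_of_le hy2 (min_le_right _ _)
      have hsub' : ∀ z, x₀ < z → z ≤ y → 0 < deriv f z :=
        fun z h1' h2' => (hsub ⟨h1', lt_of_le_of_lt h2' hyu⟩).1
      have hcont : ContinuousOn f (Icc x₀ y) := hfcont.continuousOn
      have hder : ∀ z ∈ Ioo x₀ y, HasDerivAt f (deriv f z) z := by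
        intro z hz
        have hz0 : z < 0 := lt_trans hz.2 hy0
        have hd : HasDerivAt f (-1/(12*Real.sqrt (-z/6)) - deriv q z) z := by
          rw [hfF]
          exact (hL1 z hz0).sub (hqdiff z).hasDerivAt
        rw [hd.deriv]
        exact hd
      obtain ⟨c, hc, hceq⟩ := exists_hasDerivAt_eq_slope f (deriv f) hy1 hcont hder
      have hc1 : 0 < deriv f c := hsub' c hc.1 (le_of_lt hc.2)
      rw [hceq, hroot] at hc1
      have hfyneg : f y < 0 := fneg y hy1 hy0
      have : (f y - 0)/(y - x₀) < 0 := div_neg_of_neg_of_pos (by linarith) (by linarith)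
      linarith
    · -- m > 0 : contradiction
      exfalso
      have h1 : ∀ᶠ z in nhdsWithin x₀ (Ioi x₀), 0 < slope f x₀ z :=
        (hslope.eventually (eventually_gt_nhds hm)).filter_mono
          (nhdsWithin_mono x₀ (fun z hz => Set.mem_compl_singleton_iff.mpr (ne_of_gt hz)))
      have h2 : ∀ᶠ z in nhdsWithin x₀ (Ioi x₀), slope f x₀ z < 0 := by
        filter_upwards [Ioo_mem_nhdsGT_of_mem (show x₀ ∈ Ico x₀ (0:ℝ) from ⟨le_rfl, hx₀neg⟩),
          self_mem_nhdsWithin] with z hz3 hz2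
        have hz4 : x₀ < z := hz2
        rw [slope_def_field, hroot]
        exact div_neg_of_neg_of_pos (by linarith [fneg z hz3.1 hz3.2]) (by linarith)
      obtain ⟨z, hz1, hz2⟩ := (h1.and h2).exists
      linarith
  -- f > 0 on (-∞, x₀)
  have hD : ∀ z, z < x₀ → 0 < f z := by
    intro z hz
    by_contra hcon
    push_neg at hcon
    obtain ⟨a, ha, hA⟩ := hC
    by_cases hza : a < z
    · exact absurd (hA z hza hz) (by linarith)
    push_neg at hza
    set T := Icc z a ∩ {y | f y ≤ 0} with hT_def
    have hTne : T.Nonempty := ⟨z, ⟨le_rfl, hza⟩, hcon⟩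
    have hTc : IsCompact T :=
      isCompact_Icc.inter_right (isClosed_le hfcont continuous_const)
    set x₂ := sSup T with hx2_def
    have hx₂T : x₂ ∈ T := hTc.sSup_mem hTne
    obtain ⟨⟨hzx₂, hx₂a⟩, hfx₂le⟩ := hx₂T
    have hx₂0 : x₂ < x₀ := lt_of_le_of_lt hx₂a ha
    have hgt : ∀ y, x₂ < y → y < x₀ → 0 < f y := by
      intro y h1 h2
      by_cases hya : a < y
      · exact hA y hya h2
      · push_neg at hya
        by_contra hcon2
        push_neg at hcon2
        have hyT : y ∈ T := ⟨⟨le_trans hzx₂ h1.le, hya⟩, hcon2⟩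
        have := le_csSup hTc.bddAbove hyT
        linarith
    have hfx₂ : f x₂ = 0 := by
      have hfle : f x₂ ≤ 0 := hfx₂le
      rcases lt_or_eq_of_le hfle with h | h
      · exfalso
        have hU : f ⁻¹' (Iio 0) ∈ nhds x₂ :=
          hfcont.continuousAt.preimage_mem_nhds (Iio_mem_nhds h)
        have hU' : f ⁻¹' (Iio 0) ∈ nhdsWithin x₂ (Ioi x₂) := nhdsWithin_le_nhds hU
        have hI : Ioo x₂ x₀ ∈ nhdsWithin x₂ (Ioi x₂) :=
          Ioo_mem_nhdsGT_of_mem ⟨le_rfl, hx₂0⟩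
        obtain ⟨y, hy1, hy2⟩ := Filter.nonempty_of_mem (Filter.inter_mem hU' hI)
        have hy3 : f y < 0 := hy1
        linarith [hgt y hy2.1 hy2.2]
      · exact h
    have hconv : StrictConvexOn ℝ (Icc x₂ x₀) f := by
      apply strictConvexOn_of_deriv2_pos (convex_Icc _ _) hfcont.continuousOn
      intro y hy
      rw [interior_Icc] at hy
      have hfy : 0 < f y := hgt y hy.1 hy.2
      have hqy : q y ≤ Real.sqrt (-y/6) := by
        have := hf y
        rw [this] at hfy
        linarith
      obtain ⟨hk1, hk2⟩ := key y (le_of_lt hy.2) hqy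
      have h22 : deriv^[2] f y = deriv (deriv f) y := rfl
      rw [h22, hk1.deriv]
      exact hk2
    have hmidmem : (x₂ + x₀)/2 ∈ Ioo x₂ x₀ := ⟨by linarith, by linarith⟩
    have hmid := hconv.2 (Set.left_mem_Icc.mpr hx₂0.le) (Set.right_mem_Icc.mpr hx₂0.le)
      (ne_of_lt hx₂0) one_half_pos one_half_pos (by norm_num)
    simp only [smul_eq_mul] at hmid
    rw [hfx₂, hroot,
      show (1/2 : ℝ)*x₂ + (1/2:ℝ)*x₀ = (x₂+x₀)/2 by ring] at hmid
    have := hgt ((x₂+x₀)/2) hmidmem.1 hmidmem.2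
    linarith
  -- conclusion
  refine ⟨part1, ?_⟩
  intro x hx hqge
  rcases lt_or_eq_of_le hx with hlt | heq
  · exfalso
    have h := hD x hlt
    rw [hf x] at h
    linarith
  · obtain ⟨hk1, hk2⟩ := key x₀ le_rfl (le_of_eq hq0x)
    rw [heq, hk1.deriv]
    exact hk2
end
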